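/- Let R be a commutative Noetherian ring and 𝔞 a proper ideal of R such that R is relative Cohen-Macaulay with respect to 𝔞, and let M be a faithful multiplication R-module which is finitely generated. Then f_𝔞(M) = f_𝔞(R). -/

import Mathlib

open CategoryTheory

noncomputable section

universe u v

/-- The `i`-th local cohomology module of the `R`-module `M` with support in the ideal `I`. -/
abbrev LC (R : Type u) [CommRing R] (I : Ideal R) (i : ℕ)
    (M : Type u) [AddCommGroup M] [Module R M] : ModuleCat.{u} R :=
  (localCohomology I i).obj (ModuleCat.of R M)

/-- `M` is relative Cohen-Macaulay with respect to `I` if there is precisely one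
non-vanishing local cohomology module of `M` with support in `I`
(equivalently, `grade(I,M) = cd(I,M)`). -/
def IsRelativeCM (R : Type u) [CommRing R] (I : Ideal R)
    (M : Type u) [AddCommGroup M] [Module R M] : Prop :=
  ∃! i : ℕ, Nontrivial (LC R I i M)

/-- The `M`-height of the ideal `I`: the infimum of `dim_{R_p} M_p`
(i.e. the height of `p` in the support of `M`) over primes `p ∈ Supp M ∩ V(I)`. -/
def heightM (R : Type u) [CommRing R] (I : Ideal R)
    (M : Type u) [AddCommGroup M] [Module R M] : ℕ∞ :=
  sInf {n : ℕ∞ | ∃ p : Module.support R M, I ≤ (p : PrimeSpectrum R).asIdeal ∧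
    n = Order.height p}

/-- Krull dimension of the module `M`: the supremum of heights of primes in its support. -/
def moduleDim (R : Type u) [CommRing R]
    (M : Type u) [AddCommGroup M] [Module R M] : ℕ∞ :=
  sSup {n : ℕ∞ | ∃ p : Module.support R M, n = Order.height p}

/-- The finiteness dimension `f_I(M)`: the least `i` such that `H^i_I(M)` is
not finitely generated (`+∞` if there is no such `i`). -/
def finDim (R : Type u) [CommRing R] (I : Ideal R)
    (M : Type u) [AddCommGroup M] [Module R M] : ℕ∞ :=
  sInf {n : ℕ∞ | ∃ i : ℕ, n = i ∧ ¬ Module.Finite R (LC R I i M)}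

/-- The `b`-finiteness dimension `f_I^b(M)`: the least `i` such that
`b ⊄ Rad(Ann H^i_I(M))`. -/
def bFinDim (R : Type u) [CommRing R] (I b : Ideal R)
    (M : Type u) [AddCommGroup M] [Module R M] : ℕ∞ :=
  sInf {n : ℕ∞ | ∃ i : ℕ, n = i ∧ ¬ b ≤ (Module.annihilator R (LC R I i M)).radical}

/-- `q_I(M)`: the supremum of `i` such that `H^i_I(M)` is not Artinian. -/
def qDim (R : Type u) [CommRing R] (I : Ideal R)
    (M : Type u) [AddCommGroup M] [Module R M] : ℕ∞ :=
  sSup {n : ℕ∞ | ∃ i : ℕ, n = i ∧ ¬ IsArtinian R (LC R I i M)}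

/-- grade of `I` on `M`: the least `i` with `H^i_I(M) ≠ 0`. -/
def gradeNat (R : Type u) [CommRing R] (I : Ideal R)
    (M : Type u) [AddCommGroup M] [Module R M] : ℕ :=
  sInf {i : ℕ | Nontrivial (LC R I i M)}

/-- cohomological dimension of `M` with respect to `I`:
the greatest `i` with `H^i_I(M) ≠ 0`. -/
def cdNat (R : Type u) [CommRing R] (I : Ideal R)
    (M : Type u) [AddCommGroup M] [Module R M] : ℕ :=
  sSup {i : ℕ | Nontrivial (LC R I i M)}

/-- The depth of a module, expressed as the grade of the ideal `J`:
the least `i` with `H^i_J(M) ≠ 0`, as an element of `ℕ∞`. -/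
def lcDepth (R : Type u) [CommRing R] (J : Ideal R)
    (M : Type u) [AddCommGroup M] [Module R M] : ℕ∞ :=
  sInf {n : ℕ∞ | ∃ i : ℕ, n = i ∧ Nontrivial (LC R J i M)}

/-- The height of an ideal: the infimum of heights of primes containing it. -/
def idealHeight (R : Type u) [CommRing R] (I : Ideal R) : ℕ∞ :=
  sInf {n : ℕ∞ | ∃ p : PrimeSpectrum R, I ≤ p.asIdeal ∧ n = Order.height p}

/-- The `b`-minimum `I`-adjusted depth `λ_I^b(M)`:
`inf {depth M_p + height((I+p)/p) : p ∈ Spec R \ V(b)}`. -/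
def lambdaDim (R : Type u) [CommRing R] (I b : Ideal R)
    (M : Type u) [AddCommGroup M] [Module R M] : ℕ∞ :=
  sInf {n : ℕ∞ | ∃ p : PrimeSpectrum R, ¬ b ≤ p.asIdeal ∧
    n = lcDepth (Localization.AtPrime p.asIdeal)
          (IsLocalRing.maximalIdeal (Localization.AtPrime p.asIdeal))
          (LocalizedModule p.asIdeal.primeCompl M)
        + idealHeight (R ⧸ p.asIdeal) (Ideal.map (Ideal.Quotient.mk p.asIdeal) I)}


section Aux15
open Finset CategoryTheory CategoryTheory.Limits Opposite
variable {R : Type u} [CommRing R] {M : Type u} [AddCommGroup M] [Module R M]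

lemma dual_basis_of_mult [Module.Finite R M]
    (hfaithful : Module.annihilator R M = ⊥)
    (hmult : ∀ N : Submodule R M, ∃ 𝔟 : Ideal R, N = 𝔟 • (⊤ : Submodule R M)) :
    ∃ (n : ℕ) (g : Fin n → M) (f : Fin n → (M →ₗ[R] R)),
      (∀ x : M, ∑ j, f j x • g j = x) ∧ (∑ j, f j (g j)) = 1 := by
  obtain ⟨n, g, hg⟩ := Module.Finite.exists_fin (R := R) (M := M)
  choose 𝔟 h𝔟 using fun j : Fin n => hmult (Submodule.span R {g j})
  have hIN : (⊤ : Submodule R M) ≤ (⨆ j, 𝔟 j) • ⊤ := by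
    have : Submodule.span R (Set.range g) ≤ (⨆ j, 𝔟 j) • ⊤ := by
      rw [Submodule.span_le]
      rintro - ⟨j, rfl⟩
      have h1 : g j ∈ Submodule.span R {g j} := Submodule.mem_span_singleton_self _
      rw [h𝔟 j] at h1
      exact Submodule.smul_mono_left (le_iSup 𝔟 j) h1
    rwa [hg] at this
  obtain ⟨r, hr1, hr2⟩ := Submodule.exists_sub_one_mem_and_smul_eq_zero_of_fg_of_le_smul
    (⨆ j, 𝔟 j) ⊤ (Module.Finite.fg_top) hIN
  have hr0 : r = 0 := by
    have : r ∈ Module.annihilator R M := by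
      rw [Module.mem_annihilator]
      exact fun m => hr2 m Submodule.mem_top
    rw [hfaithful] at this
    exact this
  have hone : (1 : R) ∈ ⨆ j, 𝔟 j := by
    have h := hr1; rw [hr0] at h
    simpa using (Submodule.neg_mem _ h)
  rw [Submodule.mem_iSup_iff_exists_finsupp] at hone
  obtain ⟨c, hc, hcsum⟩ := hone
  set b : Fin n → R := fun j => c j with hb
  have hbsum : ∑ j, b j = 1 := by
    rw [← hcsum, Finsupp.sum_fintype]
    intro j; rfl
  have hbmem : ∀ j, b j ∈ 𝔟 j := fun j => hc j
  have hbx : ∀ (j : Fin n) (x : M), ∃ t : R, t • g j = b j • x := by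
    intro j x
    have h1 : b j • x ∈ (𝔟 j) • (⊤ : Submodule R M) :=
      Submodule.smul_mem_smul (hbmem j) Submodule.mem_top
    rw [← h𝔟 j] at h1
    exact Submodule.mem_span_singleton.mp h1
  have wd : ∀ (j : Fin n) (t t' : R), t • g j = t' • g j → b j * t = b j * t' := by
    intro j t t' h
    have hs : (t - t') • g j = 0 := by rw [sub_smul, h, sub_self]
    have hann : b j * (t - t') ∈ Module.annihilator R M := by
      rw [Module.mem_annihilator]
      intro x
      obtain ⟨s, hsx⟩ := hbx j x
      calc (b j * (t - t')) • x = (t - t') • (b j • x) := by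
            rw [mul_comm, mul_smul]
        _ = (t - t') • (s • g j) := by rw [← hsx]
        _ = s • ((t - t') • g j) := smul_comm _ _ _
        _ = 0 := by rw [hs, smul_zero]
    rw [hfaithful, Submodule.mem_bot] at hann
    rw [mul_sub] at hann
    exact sub_eq_zero.mp hann
  -- the maps f₀ j
  set tsel : Fin n → M → R := fun j x => (hbx j x).choose with htsel
  have htspec : ∀ j x, tsel j x • g j = b j • x := fun j x => (hbx j x).choose_spec
  set f₀ : Fin n → (M →ₗ[R] R) := fun j =>
    { toFun := fun x => b j * tsel j x
      map_add' := by
        intro x y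
        have : (tsel j x + tsel j y) • g j = b j • (x + y) := by
          rw [add_smul, htspec, htspec, smul_add]
        rw [wd j _ _ ((htspec j (x + y)).trans this.symm), mul_add]
      map_smul' := by
        intro a x
        have : (a * tsel j x) • g j = b j • (a • x) := by
          rw [mul_smul, htspec, smul_comm]
        rw [RingHom.id_apply, wd j _ _ ((htspec j (a • x)).trans this.symm),
          smul_eq_mul]
        ring } with hf₀
  have hf₀app : ∀ j x, f₀ j x = b j * tsel j x := fun _ _ => rfl
  have hkey : ∀ j x, f₀ j x • g j = (b j * b j) • x := by
    intro j x
    rw [hf₀app, mul_smul, htspec, ← mul_smul]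
  have hgg : ∀ j, f₀ j (g j) = b j * b j := by
    intro j
    rw [hf₀app]
    exact wd j _ _ (by rw [htspec])
  -- 1 ∈ span of squares
  have hsq : (1 : R) ∈ Submodule.span R (Set.range fun j => b j * b j) := by
    set J : Ideal R := Ideal.span (Set.range fun j => b j * b j) with hJ
    have hnil : ∀ j, IsNilpotent (Ideal.Quotient.mk J (b j)) := by
      intro j
      refine ⟨2, ?_⟩
      rw [pow_two, ← map_mul, Ideal.Quotient.eq_zero_iff_mem]
      exact Ideal.subset_span ⟨j, rfl⟩
    have h1 : IsNilpotent (1 : R ⧸ J) := by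
      have : (1 : R ⧸ J) = ∑ j, Ideal.Quotient.mk J (b j) := by
        rw [← map_sum, hbsum, map_one]
      rw [this]
      exact isNilpotent_sum (fun j _ => hnil j)
    obtain ⟨k, hk⟩ := h1
    rw [one_pow] at hk
    have : (Ideal.Quotient.mk J) (1 : R) = 0 := hk
    rw [Ideal.Quotient.eq_zero_iff_mem] at this
    exact this
  rw [Submodule.mem_span_range_iff_exists_fun] at hsq
  obtain ⟨d, hd⟩ := hsq
  refine ⟨n, g, fun j => d j • f₀ j, ?_, ?_⟩
  · intro x
    have : ∀ j, ((d j • f₀ j) x) • g j = (d j * (b j * b j)) • x := by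
      intro j
      rw [LinearMap.smul_apply, smul_eq_mul, mul_smul, hkey, ← mul_smul]
    simp_rw [this]
    rw [← Finset.sum_smul]
    have hd' : ∑ j, d j * (b j * b j) = 1 := by simpa [smul_eq_mul] using hd
    rw [hd', one_smul]
  · have : ∀ j, (d j • f₀ j) (g j) = d j • (b j * b j) := by
      intro j
      rw [LinearMap.smul_apply, hgg, smul_eq_mul]
    simp_rw [this]
    simpa [smul_eq_mul] using hd

section LeftDerivedAdd
variable {C : Type*} [Category C] {D : Type*} [Category D]
  [Abelian C] [HasProjectiveResolutions C] [Abelian D]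

lemma natTrans_leftDerived_add {F G : C ⥤ D} [F.Additive] [G.Additive]
    (α β : F ⟶ G) (n : ℕ) :
    NatTrans.leftDerived (α + β) n =
      NatTrans.leftDerived α n + NatTrans.leftDerived β n := by
  ext X
  have P : ProjectiveResolution X := (HasProjectiveResolution.out (Z := X)).some
  rw [NatTrans.app_add, ProjectiveResolution.leftDerived_app_eq _ P,
    ProjectiveResolution.leftDerived_app_eq _ P,
    ProjectiveResolution.leftDerived_app_eq _ P]
  have hm : (NatTrans.mapHomologicalComplex (α + β) (ComplexShape.down ℕ)).app P.complex =
      (NatTrans.mapHomologicalComplex α (ComplexShape.down ℕ)).app P.complex +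
        (NatTrans.mapHomologicalComplex β (ComplexShape.down ℕ)).app P.complex := by
    ext i
    simp
    rfl
  rw [hm, Functor.map_add]
  simp [Preadditive.comp_add, Preadditive.add_comp]
  erw [Preadditive.add_comp, Preadditive.comp_add]

end LeftDerivedAdd

section OpAdd
variable {C : Type*} [Category C] {D : Type*} [Category D] [Preadditive D]

lemma natTrans_rightOp_add {F G : Cᵒᵖ ⥤ D} (α β : F ⟶ G) :
    NatTrans.rightOp (α + β) = NatTrans.rightOp α + NatTrans.rightOp β := by
  ext X
  simp [NatTrans.rightOp, op_add]

lemma natTrans_leftOp_add {F G : C ⥤ Dᵒᵖ} (α β : F ⟶ G) :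
    NatTrans.leftOp (α + β) = NatTrans.leftOp α + NatTrans.leftOp β := by
  ext X
  simp [NatTrans.leftOp, unop_add]

end OpAdd

variable (R : Type u) [CommRing R]

lemma linearYoneda_map_add {Y Z : ModuleCat.{u} R} (f g : Y ⟶ Z) :
    (linearYoneda R (ModuleCat.{u} R)).map (f + g) =
      (linearYoneda R (ModuleCat.{u} R)).map f + (linearYoneda R (ModuleCat.{u} R)).map g := by
  ext X u
  show u ≫ (f + g) = _
  exact Preadditive.comp_add _ _ _ _ _ _

lemma ext_obj_map_add (i : ℕ) (W : (ModuleCat.{u} R)ᵒᵖ) {Y Z : ModuleCat.{u} R} (f g : Y ⟶ Z) :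
    ((Ext R (ModuleCat.{u} R) i).obj W).map (f + g) =
      ((Ext R (ModuleCat.{u} R) i).obj W).map f +
        ((Ext R (ModuleCat.{u} R) i).obj W).map g := by
  show (NatTrans.leftOp (NatTrans.leftDerived
      (NatTrans.rightOp ((linearYoneda R (ModuleCat.{u} R)).map (f + g))) i)).app W = _
  rw [linearYoneda_map_add, natTrans_rightOp_add, natTrans_leftDerived_add,
    natTrans_leftOp_add, NatTrans.app_add]
  rfl

instance extObjAdditive (i : ℕ) (W : (ModuleCat.{u} R)ᵒᵖ) :
    ((Ext R (ModuleCat.{u} R) i).obj W).Additive :=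
  ⟨ext_obj_map_add R i W _ _⟩

lemma lc_map_add (𝔞 : Ideal R) (i : ℕ) {X Y : ModuleCat.{u} R} (f g : X ⟶ Y) :
    (localCohomology 𝔞 i).map (f + g) =
      (localCohomology 𝔞 i).map f + (localCohomology 𝔞 i).map g := by
  have hD : HasColimit (localCohomology.diagram (localCohomology.idealPowersDiagram 𝔞) i) :=
    localCohomology.hasColimitDiagram _ i
  set D := localCohomology.diagram (localCohomology.idealPowersDiagram 𝔞) i with hDdef
  show (colimit D).map (f + g) = (colimit D).map f + (colimit D).map g
  have hev : IsColimit (((evaluation (ModuleCat.{u} R) (ModuleCat.{u} R)).obj X).mapCocone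
      (colimit.cocone D)) :=
    isColimitOfPreserves _ (colimit.isColimit D)
  apply hev.hom_ext
  intro j
  have hadd : (D.obj j).map (f + g) = (D.obj j).map f + (D.obj j).map g :=
    ext_obj_map_add R i ((localCohomology.ringModIdeals (localCohomology.idealPowersDiagram 𝔞)).op.obj j) f g
  have hnat : ∀ (h : X ⟶ Y), (colimit.ι D j).app X ≫ (colimit D).map h =
      (D.obj j).map h ≫ (colimit.ι D j).app Y := fun h => ((colimit.ι D j).naturality h).symm
  show (colimit.ι D j).app X ≫ (colimit D).map (f + g) =
    (colimit.ι D j).app X ≫ ((colimit D).map f + (colimit D).map g)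
  rw [hnat, hadd, Preadditive.add_comp, Preadditive.comp_add, hnat, hnat]

instance lcAdditive (𝔞 : Ideal R) (i : ℕ) : (localCohomology 𝔞 i).Additive :=
  ⟨lc_map_add R 𝔞 i _ _⟩

lemma fin_of_retract {A B : ModuleCat.{u} R} (e : A ⟶ B) (r : B ⟶ A)
    (h : e ≫ r = 𝟙 A) [Module.Finite R B] : Module.Finite R A := by
  apply Module.Finite.of_surjective r.hom
  intro a
  refine ⟨e a, ?_⟩
  have := congrArg (fun φ : A ⟶ A => φ a) h
  simpa using this

lemma fin_pi (𝔞 : Ideal R) (i : ℕ) (X : ModuleCat.{u} R) (n : ℕ)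
    [hfin : Module.Finite R ((localCohomology 𝔞 i).obj X)] :
    Module.Finite R ((localCohomology 𝔞 i).obj (ModuleCat.of R (Fin n → X))) := by
  set F := localCohomology 𝔞 i with hF
  set P : ModuleCat.{u} R := ModuleCat.of R (Fin n → X) with hP
  set inc : Fin n → (X ⟶ P) := fun j => ModuleCat.ofHom (LinearMap.single R (fun _ => X) j) with hinc
  set prj : Fin n → (P ⟶ X) := fun j => ModuleCat.ofHom (LinearMap.proj j) with hprj
  have hid : (∑ j : Fin n, prj j ≫ inc j) = 𝟙 P := by
    apply ModuleCat.hom_ext; apply LinearMap.ext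
    intro v
    have : (∑ j : Fin n, prj j ≫ inc j) v = ∑ j : Fin n, (prj j ≫ inc j) v :=
      (congrArg (fun φ : P →ₗ[R] P => φ v) (ModuleCat.hom_sum (fun j => prj j ≫ inc j) Finset.univ)).trans (LinearMap.sum_apply _ _ _)
    rw [this]
    have : ∀ j : Fin n, (prj j ≫ inc j) v = Pi.single j (v j) := fun j => rfl
    simp_rw [this]
    exact Finset.univ_sum_single v
  have hFid : (𝟙 (F.obj P) : F.obj P ⟶ F.obj P) =
      ∑ j : Fin n, F.map (prj j) ≫ F.map (inc j) := by
    rw [← F.map_id, ← hid, F.map_sum]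
    simp [F.map_comp]
  let Φ : (Fin n → F.obj X) →ₗ[R] F.obj P :=
    ∑ j : Fin n, (F.map (inc j)).hom.comp (LinearMap.proj j)
  apply Module.Finite.of_surjective Φ
  intro z
  refine ⟨fun j => F.map (prj j) z, ?_⟩
  have h1 : Φ (fun j => F.map (prj j) z) =
      ∑ j : Fin n, F.map (inc j) (F.map (prj j) z) := by
    rw [LinearMap.sum_apply]
    rfl
  rw [h1]
  have h2 : (∑ j : Fin n, F.map (prj j) ≫ F.map (inc j)) z =
      ∑ j : Fin n, F.map (inc j) (F.map (prj j) z) :=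
    (congrArg (fun φ : F.obj P →ₗ[R] F.obj P => φ z)
      (ModuleCat.hom_sum (fun j => F.map (prj j) ≫ F.map (inc j)) Finset.univ)).trans (LinearMap.sum_apply _ _ _)
  rw [← h2, ← hFid]
  rfl

end Aux15

theorem stmt15 (R : Type u) [CommRing R] [IsNoetherianRing R] (𝔞 : Ideal R)
    (hproper : 𝔞 ≠ ⊤) (hcm : IsRelativeCM R 𝔞 R)
    (M : Type u) [AddCommGroup M] [Module R M] [Module.Finite R M]
    (hfaithful : Module.annihilator R M = ⊥)
    (hmult : ∀ N : Submodule R M, ∃ 𝔟 : Ideal R, N = 𝔟 • (⊤ : Submodule R M)) :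
    finDim R 𝔞 M = finDim R 𝔞 R := by
  obtain ⟨n, g, f, h1, h2⟩ := dual_basis_of_mult hfaithful hmult
  let φ : M →ₗ[R] (Fin n → R) := LinearMap.pi fun j => f j
  let ψ : (Fin n → R) →ₗ[R] M :=
    ∑ j : Fin n, (LinearMap.toSpanSingleton R M (g j)).comp (LinearMap.proj j)
  have hψφ : ∀ x : M, ψ (φ x) = x := by
    intro x
    have : ψ (φ x) = ∑ j : Fin n, f j x • g j := by
      rw [LinearMap.sum_apply]
      rfl
    rw [this, h1]
  let ρ : R →ₗ[R] (Fin n → M) := LinearMap.pi fun j => LinearMap.toSpanSingleton R M (g j)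
  let σ : (Fin n → M) →ₗ[R] R := ∑ j : Fin n, (f j).comp (LinearMap.proj j)
  have hσρ : ∀ r : R, σ (ρ r) = r := by
    intro r
    have : σ (ρ r) = ∑ j : Fin n, f j (r • g j) := by
      rw [LinearMap.sum_apply]
      rfl
    rw [this]
    simp_rw [map_smul, smul_eq_mul, ← Finset.mul_sum, h2, mul_one]
  have key : ∀ i : ℕ, Module.Finite R (LC R 𝔞 i M) ↔ Module.Finite R (LC R 𝔞 i R) := by
    intro i
    constructor
    · intro h
      haveI := h
      haveI : Module.Finite R ((localCohomology 𝔞 i).obj (ModuleCat.of R (Fin n → M))) :=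
        fin_pi R 𝔞 i (ModuleCat.of R M) n
      refine fin_of_retract R ((localCohomology 𝔞 i).map (ModuleCat.ofHom ρ))
        ((localCohomology 𝔞 i).map (ModuleCat.ofHom σ)) ?_
      rw [← Functor.map_comp]
      have hcmp : ModuleCat.ofHom ρ ≫ ModuleCat.ofHom σ = 𝟙 (ModuleCat.of R R) := by
        apply ModuleCat.hom_ext; apply LinearMap.ext
        intro r
        exact hσρ r
      rw [hcmp, CategoryTheory.Functor.map_id]
    · intro h
      haveI := h
      haveI : Module.Finite R ((localCohomology 𝔞 i).obj (ModuleCat.of R (Fin n → R))) :=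
        fin_pi R 𝔞 i (ModuleCat.of R R) n
      refine fin_of_retract R ((localCohomology 𝔞 i).map (ModuleCat.ofHom φ))
        ((localCohomology 𝔞 i).map (ModuleCat.ofHom ψ)) ?_
      rw [← Functor.map_comp]
      have hcmp : ModuleCat.ofHom φ ≫ ModuleCat.ofHom ψ = 𝟙 (ModuleCat.of R M) := by
        apply ModuleCat.hom_ext; apply LinearMap.ext
        intro x
        exact hψφ x
      rw [hcmp, CategoryTheory.Functor.map_id]
  unfold finDim
  congr 1
  ext x
  simp only [Set.mem_setOf_eq]
  constructor
  · rintro ⟨i, rfl, hi⟩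
    exact ⟨i, rfl, fun hf => hi ((key i).mpr hf)⟩
  · rintro ⟨i, rfl, hi⟩
    exact ⟨i, rfl, fun hf => hi ((key i).mp hf)⟩
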